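/- Let X be a standard Borel space and T : X → X a Borel bijection. Then there exists a Borel subset A of the support of T (the set of points x with T(x) ≠ x) such that supp T = A ⊔ (T(A) ∪ T⁻¹(A)), i.e., A is disjoint from T(A) ∪ T⁻¹(A) and together they cover supp T. -/
import Mathlib


open MeasureTheory Set

/-- A separator exists for every Borel bijection of a standard Borel space:
a Borel set `A ⊆ supp T` with `supp T = A ⊔ (T(A) ∪ T⁻¹(A))`. -/
theorem separator_exists {X : Type*} [MeasurableSpace X] [StandardBorelSpace X]
    (T : X → X) (hTmeas : Measurable T) (hTbij : Function.Bijective T) :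
    ∃ A : Set X, MeasurableSet A ∧ A ⊆ {x | T x ≠ x} ∧
      Disjoint A (T '' A ∪ T ⁻¹' A) ∧
      {x | T x ≠ x} = A ∪ (T '' A ∪ T ⁻¹' A) := by
  classical
  have hemb : MeasurableEmbedding T := hTmeas.measurableEmbedding hTbij.injective
  obtain ⟨S, hScount, hSmeas, hSsep⟩ :=
    exists_countable_separating X MeasurableSet univ
  -- enumerate S together with complements and ∅
  set S' : Set (Set X) := insert ∅ (S ∪ compl '' S) with hS'
  have hS'count : S'.Countable := ((hScount.union (hScount.image _)).insert _)
  obtain ⟨f, hf⟩ := hS'count.exists_eq_range (insert_nonempty _ _)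
  have hfmeas : ∀ n, MeasurableSet (f n) := by
    intro n
    have : f n ∈ S' := hf ▸ mem_range_self n
    simp only [hS', mem_insert_iff, mem_union, mem_image] at this
    rcases this with h | h | ⟨s, hs, h⟩
    · rw [h]; exact MeasurableSet.empty
    · exact hSmeas _ h
    · rw [← h]; exact (hSmeas _ hs).compl
  -- the basic pieces
  set D : ℕ → Set X := fun n => f n ∩ T ⁻¹' (f n)ᶜ with hD
  have hDmeas : ∀ n, MeasurableSet (D n) := fun n =>
    (hfmeas n).inter (hTmeas (hfmeas n).compl)
  have hDsupp : ∀ n, D n ⊆ {x | T x ≠ x} := by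
    intro n x hx h
    exact hx.2 (show T x ∈ f n by rw [h]; exact hx.1)
  have hDcover : ∀ x, T x ≠ x → ∃ n, x ∈ D n := by
    intro x hx
    have : ¬ ∀ s ∈ S, x ∈ s ↔ T x ∈ s := fun h =>
      hx (hSsep x (mem_univ x) (T x) (mem_univ _) h).symm
    push_neg at this
    obtain ⟨s, hsS, hs⟩ := this
    rcases hs with ⟨hxs, hTx⟩ | ⟨hxs, hTx⟩
    · have : s ∈ S' := mem_insert_of_mem _ (Or.inl hsS)
      rw [hf] at this
      obtain ⟨n, hn⟩ := this
      refine ⟨n, ?_, ?_⟩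
      · rw [hn]; exact hxs
      · show T x ∉ f n
        rw [hn]; exact hTx
    · have : sᶜ ∈ S' := mem_insert_of_mem _ (Or.inr ⟨s, hsS, rfl⟩)
      rw [hf] at this
      obtain ⟨n, hn⟩ := this
      refine ⟨n, ?_, ?_⟩
      · rw [hn]; exact hxs
      · show T x ∉ f n
        rw [hn]; exact not_not.mpr hTx
  -- greedy construction
  set U : ℕ → Set X := fun n => Nat.rec ∅
    (fun k Uk => Uk ∪ ((D k \ Uk) ∪ T '' (D k \ Uk) ∪ T ⁻¹' (D k \ Uk))) n with hU
  set As : ℕ → Set X := fun n => D n \ U n with hAs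
  have hUsucc : ∀ n, U (n + 1) = U n ∪ (As n ∪ T '' As n ∪ T ⁻¹' As n) := fun n => rfl
  have hUmono : ∀ k n, k ≤ n → U k ⊆ U n := by
    intro k n hkn
    induction n with
    | zero => simp_all
    | succ m ih =>
      rcases Nat.lt_or_ge k (m + 1) with h | h
      · exact (ih (Nat.lt_succ_iff.mp h)).trans (by rw [hUsucc]; exact subset_union_left)
      · have : k = m + 1 := le_antisymm hkn h
        subst this; exact subset_rfl
  have hUmeas : ∀ n, MeasurableSet (U n) := by
    intro n
    induction n with
    | zero => exact MeasurableSet.empty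
    | succ m ih =>
      rw [hUsucc]
      exact ih.union ((((hDmeas m).diff ih).union
        (hemb.measurableSet_image' ((hDmeas m).diff ih))).union
        (hTmeas ((hDmeas m).diff ih)))
  have hAsmeas : ∀ n, MeasurableSet (As n) := fun n => (hDmeas n).diff (hUmeas n)
  have hAsub : ∀ n, As n ⊆ D n := fun n => diff_subset
  have hPartU : ∀ k n, k < n → As k ∪ T '' As k ∪ T ⁻¹' As k ⊆ U n := by
    intro k n hkn
    have : As k ∪ T '' As k ∪ T ⁻¹' As k ⊆ U (k + 1) := by
      rw [hUsucc]; exact subset_union_right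
    exact this.trans (hUmono _ _ hkn)
  refine ⟨⋃ n, As n, MeasurableSet.iUnion hAsmeas, ?_, ?_, ?_⟩
  · exact iUnion_subset fun n => (hAsub n).trans (hDsupp n)
  · rw [disjoint_union_right]
    constructor
    · rw [disjoint_iff_inter_eq_empty, eq_empty_iff_forall_notMem]
      rintro x ⟨hxA, y, hyA, rfl⟩
      obtain ⟨m, hm⟩ := mem_iUnion.mp hxA
      obtain ⟨n, hn⟩ := mem_iUnion.mp hyA
      rcases lt_trichotomy m n with h | h | h
      · exact hn.2 (hPartU m n h (Or.inr hm))
      · subst h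
        -- y ∈ D m so T y ∉ f m; but T y ∈ D m ⊆ f m
        exact (hn.1).2 hm.1.1
      · exact hm.2 (hPartU n m h (Or.inl (Or.inr ⟨y, hn, rfl⟩)))
    · rw [disjoint_iff_inter_eq_empty, eq_empty_iff_forall_notMem]
      rintro x ⟨hxA, hxT⟩
      obtain ⟨m, hm⟩ := mem_iUnion.mp hxA
      obtain ⟨n, hn⟩ := mem_iUnion.mp hxT
      rcases lt_trichotomy m n with h | h | h
      · exact hn.2 (hPartU m n h (Or.inl (Or.inr ⟨x, hm, rfl⟩)))
      · subst h
        exact hm.1.2 hn.1.1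
      · exact hm.2 (hPartU n m h (Or.inr hn))
  · apply Subset.antisymm
    · intro x hx
      obtain ⟨n, hxD⟩ := hDcover x hx
      by_cases hxU : x ∈ U n
      · -- U n is a union of previous pieces; show membership in RHS by induction on n
        have key : ∀ m, U m ⊆ (⋃ k, As k) ∪ ((T '' ⋃ k, As k) ∪ T ⁻¹' ⋃ k, As k) := by
          intro m
          induction m with
          | zero => simp [hU]
          | succ p ih =>
            rw [hUsucc]
            rintro y (hy | (hy | hy) | hy)
            · exact ih hy
            · exact Or.inl (mem_iUnion.mpr ⟨p, hy⟩)
            · exact Or.inr (Or.inl (image_mono (subset_iUnion As p) hy))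
            · exact Or.inr (Or.inr (mem_iUnion.mpr ⟨p, hy⟩))
        exact key n hxU
      · exact Or.inl (mem_iUnion.mpr ⟨n, hxD, hxU⟩)
    · rintro x (hx | (⟨y, hy, rfl⟩ | hx))
      · obtain ⟨n, hn⟩ := mem_iUnion.mp hx
        exact hDsupp n (hAsub n hn)
      · intro h
        have : T y = y := hTbij.injective h
        obtain ⟨n, hn⟩ := mem_iUnion.mp hy
        exact hDsupp n (hAsub n hn) this
      · intro h
        obtain ⟨n, hn⟩ := mem_iUnion.mp hx
        rw [h] at hn
        exact hDsupp n (hAsub n hn) h
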